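/- Under the setup of the decomposition lemma with J(n) defined as before, for every i ≥ 1 and every γ ∈ Γ_i, there exists l ≥ i such that γJ(i) ⊆ J(l)Γ_{l+1}. -/

import Mathlib

open Pointwise

/-- For every `i ≥ 1` and `γ ∈ Γ i`, there exists `l ≥ i` with `γ • J i ⊆ J l · Γ (l+1)`. -/
theorem translate_J_subset_JGamma {G : Type*} [Group G]
    (Γ : ℕ → Subgroup G)
    (hnorm : ∀ n, (Γ n).Normal)
    (hfin : ∀ n, (Γ n).FiniteIndex)
    (hdec : ∀ n, Γ (n + 1) ≤ Γ n)
    (D : ℕ → Finset G)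
    (hD0 : D 0 = {1})
    (hDone : ∀ n, (1 : G) ∈ D n)
    (hDmono : ∀ n, D n ⊆ D (n + 1))
    (hfund : ∀ n, ∀ g : G, ∃! d, d ∈ D n ∧ g⁻¹ * d ∈ Γ n)
    (hcompat : ∀ i j, i < j →
      (D j : Set G) = ⋃ v ∈ (D j : Set G) ∩ (Γ i : Set G), v • (D i : Set G))
    (J : ℕ → Set G)
    (hJ : ∀ n, J n = (D n : Set G) \ ⋃ i ∈ Finset.range n, J i * (Γ (i + 1) : Set G))
    (hGcov : ∀ g : G, ∃ n, g ∈ D n)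
    (htriv : ∀ g : G, (∀ n, g ∈ Γ n) → g = 1)
    :
    ∀ i : ℕ, 1 ≤ i → ∀ γ ∈ Γ i, ∃ l : ℕ, i ≤ l ∧ γ • J i ⊆ J l * (Γ (l + 1) : Set G) := by
  -- monotonicity of D
  have hDle : ∀ a b : ℕ, a ≤ b → D a ⊆ D b := by
    intro a b hab
    induction hab with
    | refl => exact Finset.Subset.refl _
    | step _ ih => exact ih.trans (hDmono _)
  -- antitonicity of Γ
  have hGle : ∀ a b : ℕ, a ≤ b → Γ b ≤ Γ a := by
    intro a b hab
    induction hab with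
    | refl => exact le_rfl
    | step _ ih => exact (hdec _).trans ih
  -- easy case: γ ∈ Γ (i+1)
  have hcase1 : ∀ i : ℕ, ∀ γ : G, γ ∈ Γ (i+1) → γ • J i ⊆ J i * (Γ (i+1) : Set G) := by
    intro i γ hγ y hy
    rw [Set.mem_smul_set] at hy
    obtain ⟨x, hx, rfl⟩ := hy
    rw [Set.mem_mul]
    refine ⟨x, hx, x⁻¹ * γ * x, (hnorm (i+1)).conj_mem' γ hγ x, ?_⟩
    simp only [smul_eq_mul]; group
  -- key sublemma : translating J i by a nontrivial representative lands in J (i+1)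
  have hkey : ∀ i : ℕ, ∀ v : G, v ∈ D (i+1) → v ∈ Γ i → v ≠ 1 →
      ∀ x ∈ J i, v * x ∈ J (i+1) := by
    intro i v hvD hvΓ hv1 x hx
    rw [hJ i, Set.mem_diff] at hx
    obtain ⟨hxD, hxN⟩ := hx
    have hxD' : x ∈ D i := hxD
    have hvxD : v * x ∈ (D (i+1) : Set G) := by
      rw [hcompat i (i+1) (Nat.lt_succ_self i)]
      exact Set.mem_biUnion (Set.mem_inter (by exact_mod_cast hvD) hvΓ)
        (Set.smul_mem_smul_set hxD)
    rw [hJ (i+1), Set.mem_diff]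
    refine ⟨hvxD, ?_⟩
    intro hmem
    rw [Set.mem_iUnion₂] at hmem
    obtain ⟨m, hm, hvx⟩ := hmem
    rw [Finset.mem_range, Nat.lt_succ_iff] at hm
    rw [Set.mem_mul] at hvx
    obtain ⟨y, hy, z, hz, hyz⟩ := hvx
    rcases Nat.lt_or_ge m i with hmi | hmi
    · -- m < i : contradiction with x ∉ J m * Γ (m+1)
      apply hxN
      rw [Set.mem_iUnion₂]
      refine ⟨m, Finset.mem_range.mpr hmi, ?_⟩
      rw [Set.mem_mul]
      refine ⟨y, hy, (y⁻¹ * v⁻¹ * y) * z, ?_, ?_⟩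
      · refine mul_mem ((hnorm (m+1)).conj_mem' _ ?_ y) hz
        exact inv_mem (hGle (m+1) i hmi hvΓ)
      · rw [show y * (y⁻¹ * v⁻¹ * y * z) = v⁻¹ * (y * z) by group, hyz]
        group
    · -- m = i
      have hmi' : m = i := le_antisymm hm hmi
      subst hmi'
      have hyJ : y ∈ J m := hy
      have hyDm : y ∈ D m := by
        rw [hJ m, Set.mem_diff] at hyJ; exact hyJ.1
      have hyD : y ∈ D (m+1) := hDmono m hyDm
      obtain ⟨d, _, hduni⟩ := hfund (m+1) (v*x)
      have e1 : y = d := by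
        refine hduni y ⟨hyD, ?_⟩
        rw [show (v*x)⁻¹ * y = (v*x)⁻¹ * ((y * z) * z⁻¹) by group, hyz,
          show (v*x)⁻¹ * (v * x * z⁻¹) = z⁻¹ by group]
        exact inv_mem hz
      have e2 : v * x = d := by
        refine hduni (v*x) ⟨by exact_mod_cast hvxD, ?_⟩
        rw [inv_mul_cancel]; exact one_mem _
      have hvxJ : v * x ∈ J m := by rw [e2, ← e1]; exact hyJ
      have hvxDm : v * x ∈ D m := by
        rw [hJ m, Set.mem_diff] at hvxJ; exact_mod_cast hvxJ.1
      obtain ⟨d', _, hduni'⟩ := hfund m (v*x)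
      have e3 : v * x = d' := by
        refine hduni' (v*x) ⟨hvxDm, ?_⟩
        rw [inv_mul_cancel]; exact one_mem _
      have e4 : x = d' := by
        refine hduni' x ⟨hxD', ?_⟩
        rw [show (v*x)⁻¹ * x = x⁻¹ * v⁻¹ * x by group]
        exact (hnorm m).conj_mem' _ (inv_mem hvΓ) x
      have : v * x = x := e3.trans e4.symm
      exact hv1 (mul_eq_right.mp this)
  -- main induction
  have main : ∀ k i : ℕ, ∀ γ : G, γ ∈ Γ i → ∀ x ∈ J i, γ * x ∈ D (i + k) →
      ∃ l, i ≤ l ∧ γ • J i ⊆ J l * (Γ (l+1) : Set G) := by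
    intro k
    induction k with
    | zero =>
      intro i γ hγ x hx hD
      have hxD : x ∈ D i := by
        rw [hJ i, Set.mem_diff] at hx; exact hx.1
      obtain ⟨d, _, hduni⟩ := hfund i (γ * x)
      have e1 : γ * x = d := by
        refine hduni (γ*x) ⟨hD, ?_⟩
        rw [inv_mul_cancel]; exact one_mem _
      have e2 : x = d := by
        refine hduni x ⟨hxD, ?_⟩
        rw [show (γ*x)⁻¹ * x = x⁻¹ * γ⁻¹ * x by group]
        exact (hnorm i).conj_mem' _ (inv_mem hγ) x
      have hγ1 : γ = 1 := mul_eq_right.mp (e1.trans e2.symm)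
      refine ⟨i, le_rfl, ?_⟩
      intro y hy
      rw [Set.mem_smul_set] at hy
      obtain ⟨x', hx', rfl⟩ := hy
      rw [Set.mem_mul]
      refine ⟨x', hx', 1, one_mem _, ?_⟩
      rw [hγ1]; simp
    | succ k ih =>
      intro i γ hγ x hx hD
      by_cases hγ1 : γ ∈ Γ (i+1)
      · exact ⟨i, le_rfl, hcase1 i γ hγ1⟩
      · obtain ⟨v, ⟨hvD, hvΓ'⟩, _⟩ := hfund (i+1) γ
        have hv1 : v ≠ 1 := by
          rintro rfl
          exact hγ1 (by simpa using inv_mem hvΓ')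
        have hvΓ : v ∈ Γ i := by
          have h1 : γ⁻¹ * v ∈ Γ i := hdec i hvΓ'
          have := mul_mem hγ h1
          simpa [mul_assoc] using this
        have hγ'' : γ * v⁻¹ ∈ Γ (i+1) := by
          have h1 : v⁻¹ * γ ∈ Γ (i+1) := by simpa using inv_mem hvΓ'
          have h2 := (hnorm (i+1)).conj_mem _ h1 v
          simpa [mul_assoc] using h2
        have hDk : (γ * v⁻¹) * (v * x) ∈ D ((i+1) + k) := by
          rw [show (γ * v⁻¹) * (v * x) = γ * x by group,
            show (i+1) + k = i + (k+1) by omega]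
          exact hD
        obtain ⟨l, hl, hsub⟩ := ih (i+1) (γ*v⁻¹) hγ'' (v*x) (hkey i v hvD hvΓ hv1 x hx) hDk
        refine ⟨l, by omega, ?_⟩
        intro y hy
        rw [Set.mem_smul_set] at hy
        obtain ⟨x', hx', rfl⟩ := hy
        have heq : γ • x' = (γ * v⁻¹) • (v * x') := by
          simp only [smul_eq_mul]; group
        rw [heq]
        exact hsub (Set.smul_mem_smul_set (hkey i v hvD hvΓ hv1 x' hx'))
  intro i _ γ hγ
  rcases Set.eq_empty_or_nonempty (J i) with hJi | ⟨x, hx⟩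
  · refine ⟨i, le_rfl, ?_⟩
    rw [hJi]
    simp
  · obtain ⟨N, hN⟩ := hGcov (γ * x)
    exact main N i γ hγ x hx (hDle N (i+N) (by omega) hN)
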